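/- (Charged particle in a slowly varying magnetic field: fast dynamics.) Fix constants B > 0 and λ ∈ ℝ, and on the domain {q₂ > 0} of ℝ⁴_{(p₂,q₂,p₃,q₃)} let H := (1/2)[ p₂² + p₃²(B²q₂² + λ²/q₂²) + 2λp₂p₃/q₂ + q₃²/q₂² ] and ω := √(B²q₂⁴ + λ²)/q₂². Let X_H^{(0)} be the Hamiltonian vector field in the fast variables (p₃,q₃): ṗ₃ = −∂H/∂q₃, q̇₃ = ∂H/∂p₃, with (p₂,q₂) frozen, and Υ := (1/ω)X_H^{(0)}. Then: (i) for each fixed (p₂,q₂,p₃,q₃) with q₂ > 0, the curve t ↦ ( P₃(t), Q₃(t) ) with P₃(t) := (p₃ + λp₂/(ω²q₂³))cos t − (q₃/(ωq₂²))sin t − λp₂/(ω²q₂³) and Q₃(t) := (ωq₂²p₃ + λp₂/(ωq₂))sin t + q₃ cos t is the integral curve of Υ starting at (p₃,q₃), and it is 2π-periodic; (ii) the function J := (1/(2ω))( q₃²/q₂² + (ωq₂p₃ + λp₂/(ωq₂²))² ) satisfies ∂J/∂p₃ = (1/ω)∂H/∂p₃ and ∂J/∂q₃ = (1/ω)∂H/∂q₃,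 and J is constant along this flow: J(p₂,q₂,P₃(t),Q₃(t)) = J(p₂,q₂,p₃,q₃) for all t. -/

import Mathlib

open Real

noncomputable section

/-- Phase space of the charged particle: `(p₂, q₂, p₃, q₃) ∈ ℝ⁴`, slow variables
`(p₂,q₂)`, fast variables `(p₃,q₃)`. -/
abbrev CP := ℝ × ℝ × ℝ × ℝ

/-- The Hamiltonian
`H = (1/2)[p₂² + p₃²(B²q₂² + λ²/q₂²) + 2λp₂p₃/q₂ + q₃²/q₂²]`. -/
def Hcp (B lam : ℝ) (m : CP) : ℝ :=
  (1 / 2) * (m.1 ^ 2 + m.2.2.1 ^ 2 * (B ^ 2 * m.2.1 ^ 2 + lam ^ 2 / m.2.1 ^ 2) +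
    2 * lam * m.1 * m.2.2.1 / m.2.1 + m.2.2.2 ^ 2 / m.2.1 ^ 2)

/-- The frequency function `ω = √(B²q₂⁴ + λ²)/q₂²`. -/
def ωcp (B lam : ℝ) (m : CP) : ℝ :=
  Real.sqrt (B ^ 2 * m.2.1 ^ 4 + lam ^ 2) / m.2.1 ^ 2

/-- The momentum map `J = (1/(2ω))( q₃²/q₂² + (ωq₂p₃ + λp₂/(ωq₂²))² )`. -/
def Jcp (B lam : ℝ) (m : CP) : ℝ :=
  (1 / (2 * ωcp B lam m)) * (m.2.2.2 ^ 2 / m.2.1 ^ 2 +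
    (ωcp B lam m * m.2.1 * m.2.2.1 + lam * m.1 / (ωcp B lam m * m.2.1 ^ 2)) ^ 2)

/-- `P₃(t)`, the `p₃`-component of the flow of `Υ = (1/ω)X_H^{(0)}`. -/
def Pcur (B lam p₂ q₂ p₃ q₃ : ℝ) (t : ℝ) : ℝ :=
  (p₃ + lam * p₂ / ((ωcp B lam (p₂, q₂, p₃, q₃)) ^ 2 * q₂ ^ 3)) * Real.cos t -
    (q₃ / (ωcp B lam (p₂, q₂, p₃, q₃) * q₂ ^ 2)) * Real.sin t -
    lam * p₂ / ((ωcp B lam (p₂, q₂, p₃, q₃)) ^ 2 * q₂ ^ 3)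

/-- `Q₃(t)`, the `q₃`-component of the flow of `Υ = (1/ω)X_H^{(0)}`. -/
def Qcur (B lam p₂ q₂ p₃ q₃ : ℝ) (t : ℝ) : ℝ :=
  (ωcp B lam (p₂, q₂, p₃, q₃) * q₂ ^ 2 * p₃ +
      lam * p₂ / (ωcp B lam (p₂, q₂, p₃, q₃) * q₂)) * Real.sin t + q₃ * Real.cos t


namespace Stmt18Aux

lemma omega_eq (B lam p₂ q₂ p₃ q₃ : ℝ) :
    ωcp B lam (p₂, q₂, p₃, q₃) = Real.sqrt (B ^ 2 * q₂ ^ 4 + lam ^ 2) / q₂ ^ 2 := rfl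

lemma omega_pos (B lam : ℝ) (hB : 0 < B) (p₂ q₂ p₃ q₃ : ℝ) (hq : 0 < q₂) :
    0 < ωcp B lam (p₂, q₂, p₃, q₃) := by
  rw [omega_eq]
  have h : 0 < B ^ 2 * q₂ ^ 4 + lam ^ 2 := by positivity
  positivity

lemma omega_sq (B lam : ℝ) (hB : 0 < B) (p₂ q₂ p₃ q₃ : ℝ) (hq : 0 < q₂) :
    (ωcp B lam (p₂, q₂, p₃, q₃)) ^ 2 * q₂ ^ 4 = B ^ 2 * q₂ ^ 4 + lam ^ 2 := by
  have hq0 : q₂ ≠ 0 := ne_of_gt hq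
  rw [omega_eq, div_pow, Real.sq_sqrt (by positivity)]
  field_simp

lemma diff_H (B lam : ℝ) (m : CP) (hq : m.2.1 ≠ 0) : DifferentiableAt ℝ (Hcp B lam) m := by
  unfold Hcp
  have h2 : m.2.1 ^ 2 ≠ 0 := pow_ne_zero _ hq
  simp only [div_eq_mul_inv]
  fun_prop (disch := assumption)

lemma diff_ω (B lam : ℝ) (hB : 0 < B) (m : CP) (hq : 0 < m.2.1) :
    DifferentiableAt ℝ (ωcp B lam) m := by
  unfold ωcp
  have h2 : m.2.1 ^ 2 ≠ 0 := by positivity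
  have h3 : B ^ 2 * m.2.1 ^ 4 + lam ^ 2 ≠ 0 := by positivity
  have hs : DifferentiableAt ℝ (fun m : CP => Real.sqrt (B ^ 2 * m.2.1 ^ 4 + lam ^ 2)) m :=
    DifferentiableAt.sqrt (by fun_prop) h3
  simp only [div_eq_mul_inv]
  fun_prop (disch := assumption)

lemma omega_pos' (B lam : ℝ) (hB : 0 < B) (m : CP) (hq : 0 < m.2.1) : 0 < ωcp B lam m := by
  unfold ωcp
  have h : 0 < B ^ 2 * m.2.1 ^ 4 + lam ^ 2 := by positivity
  positivity

lemma diff_J (B lam : ℝ) (hB : 0 < B) (m : CP) (hq : 0 < m.2.1) :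
    DifferentiableAt ℝ (Jcp B lam) m := by
  have hω : DifferentiableAt ℝ (ωcp B lam) m := diff_ω B lam hB m hq
  have hω0 : ωcp B lam m ≠ 0 := ne_of_gt (omega_pos' B lam hB m hq)
  have h1 : 2 * ωcp B lam m ≠ 0 := by positivity
  have h2 : m.2.1 ^ 2 ≠ 0 := by positivity
  have h3 : ωcp B lam m * m.2.1 ^ 2 ≠ 0 := by positivity
  unfold Jcp
  simp only [div_eq_mul_inv]
  fun_prop (disch := assumption)

lemma fderiv_dir (f : CP → ℝ) (m v : CP) (hf : DifferentiableAt ℝ f m) {d : ℝ}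
    (hd : HasDerivAt (fun s : ℝ => f (m + s • v)) d 0) : fderiv ℝ f m v = d := by
  have hline : HasDerivAt (fun s : ℝ => m + s • v) v 0 := by
    simpa using ((hasDerivAt_id (0 : ℝ)).smul_const v).const_add m
  have hm : m + (0 : ℝ) • v = m := by simp
  have h2 : HasDerivAt (fun s : ℝ => f (m + s • v)) (fderiv ℝ f m v) 0 := by
    have := (hm ▸ hf.hasFDerivAt).comp_hasDerivAt 0 hline
    rw [hm] at this
    exact this
  exact h2.unique hd

lemma fderiv_H_p3 (B lam p₂ q₂ p₃ q₃ : ℝ) (hq : q₂ ≠ 0) :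
    fderiv ℝ (Hcp B lam) (p₂, q₂, p₃, q₃) (0, 0, 1, 0) =
      p₃ * (B ^ 2 * q₂ ^ 2 + lam ^ 2 / q₂ ^ 2) + lam * p₂ / q₂ := by
  apply fderiv_dir _ _ _ (diff_H B lam (p₂, q₂, p₃, q₃) hq)
  have heq : (fun s : ℝ => Hcp B lam ((p₂, q₂, p₃, q₃) + s • ((0 : ℝ), (0 : ℝ), (1 : ℝ), (0 : ℝ)))) =
      fun s : ℝ => (1 / 2) * (p₂ ^ 2 + (p₃ + s) ^ 2 * (B ^ 2 * q₂ ^ 2 + lam ^ 2 / q₂ ^ 2) +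
        2 * lam * p₂ * (p₃ + s) / q₂ + q₃ ^ 2 / q₂ ^ 2) := by
    funext s
    simp [Hcp]
    try ring
  rw [heq]
  have h0 : HasDerivAt (fun s : ℝ => p₃ + s) 1 0 := by
    simpa using (hasDerivAt_id (0 : ℝ)).const_add p₃
  have h := ((((h0.pow 2).mul_const (B ^ 2 * q₂ ^ 2 + lam ^ 2 / q₂ ^ 2)).const_add (p₂ ^ 2)).add
      ((h0.const_mul (2 * lam * p₂)).div_const q₂)).add_const (q₃ ^ 2 / q₂ ^ 2) |>.const_mul (1 / 2)
  apply HasDerivAt.congr_deriv h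
  push_cast
  ring

lemma fderiv_H_q3 (B lam p₂ q₂ p₃ q₃ : ℝ) (hq : q₂ ≠ 0) :
    fderiv ℝ (Hcp B lam) (p₂, q₂, p₃, q₃) (0, 0, 0, 1) = q₃ / q₂ ^ 2 := by
  apply fderiv_dir _ _ _ (diff_H B lam (p₂, q₂, p₃, q₃) hq)
  have heq : (fun s : ℝ => Hcp B lam ((p₂, q₂, p₃, q₃) + s • ((0 : ℝ), (0 : ℝ), (0 : ℝ), (1 : ℝ)))) =
      fun s : ℝ => (1 / 2) * ((p₂ ^ 2 + p₃ ^ 2 * (B ^ 2 * q₂ ^ 2 + lam ^ 2 / q₂ ^ 2) +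
        2 * lam * p₂ * p₃ / q₂) + (q₃ + s) ^ 2 / q₂ ^ 2) := by
    funext s
    simp [Hcp]
    try ring
  rw [heq]
  have h0 : HasDerivAt (fun s : ℝ => q₃ + s) 1 0 := by
    simpa using (hasDerivAt_id (0 : ℝ)).const_add q₃
  have h := (((h0.pow 2).div_const (q₂ ^ 2)).const_add
      (p₂ ^ 2 + p₃ ^ 2 * (B ^ 2 * q₂ ^ 2 + lam ^ 2 / q₂ ^ 2) + 2 * lam * p₂ * p₃ / q₂)).const_mul (1 / 2)
  apply HasDerivAt.congr_deriv h
  push_cast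
  ring

end Stmt18Aux

/-- Charged particle, fast dynamics: (i) the explicit curve
`(P₃(t), Q₃(t))` is the `2π`-periodic integral curve of `Υ = (1/ω)X_H^{(0)}`
starting at `(p₃,q₃)`; (ii) `J` satisfies `d₀J = (1/ω)d₀H` on `{q₂ > 0}` and is
constant along this flow. -/
theorem stmt18 (B lam : ℝ) (hB : 0 < B) :
    (∀ p₂ q₂ p₃ q₃ : ℝ, 0 < q₂ →
      (Pcur B lam p₂ q₂ p₃ q₃ 0 = p₃ ∧ Qcur B lam p₂ q₂ p₃ q₃ 0 = q₃) ∧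
      (∀ t : ℝ,
        HasDerivAt (Pcur B lam p₂ q₂ p₃ q₃)
          (-(1 / ωcp B lam (p₂, q₂, Pcur B lam p₂ q₂ p₃ q₃ t, Qcur B lam p₂ q₂ p₃ q₃ t)) *
            fderiv ℝ (Hcp B lam)
              (p₂, q₂, Pcur B lam p₂ q₂ p₃ q₃ t, Qcur B lam p₂ q₂ p₃ q₃ t) (0, 0, 0, 1)) t ∧
        HasDerivAt (Qcur B lam p₂ q₂ p₃ q₃)
          ((1 / ωcp B lam (p₂, q₂, Pcur B lam p₂ q₂ p₃ q₃ t, Qcur B lam p₂ q₂ p₃ q₃ t)) *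
            fderiv ℝ (Hcp B lam)
              (p₂, q₂, Pcur B lam p₂ q₂ p₃ q₃ t, Qcur B lam p₂ q₂ p₃ q₃ t) (0, 0, 1, 0)) t) ∧
      (∀ t : ℝ, Pcur B lam p₂ q₂ p₃ q₃ (t + 2 * π) = Pcur B lam p₂ q₂ p₃ q₃ t ∧
        Qcur B lam p₂ q₂ p₃ q₃ (t + 2 * π) = Qcur B lam p₂ q₂ p₃ q₃ t)) ∧
    (∀ m : CP, 0 < m.2.1 →
      fderiv ℝ (Jcp B lam) m (0, 0, 1, 0) =
        (1 / ωcp B lam m) * fderiv ℝ (Hcp B lam) m (0, 0, 1, 0) ∧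
      fderiv ℝ (Jcp B lam) m (0, 0, 0, 1) =
        (1 / ωcp B lam m) * fderiv ℝ (Hcp B lam) m (0, 0, 0, 1)) ∧
    (∀ p₂ q₂ p₃ q₃ : ℝ, 0 < q₂ → ∀ t : ℝ,
      Jcp B lam (p₂, q₂, Pcur B lam p₂ q₂ p₃ q₃ t, Qcur B lam p₂ q₂ p₃ q₃ t) =
        Jcp B lam (p₂, q₂, p₃, q₃)) := by
  refine ⟨?_, ?_, ?_⟩
  · -- Block 1
    intro p₂ q₂ p₃ q₃ hq
    have hq0 : q₂ ≠ 0 := ne_of_gt hq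
    set w := ωcp B lam (p₂, q₂, p₃, q₃) with hwdef
    have hw : 0 < w := Stmt18Aux.omega_pos B lam hB p₂ q₂ p₃ q₃ hq
    have hw0 : w ≠ 0 := ne_of_gt hw
    have hw2 : w ^ 2 * q₂ ^ 4 = B ^ 2 * q₂ ^ 4 + lam ^ 2 :=
      Stmt18Aux.omega_sq B lam hB p₂ q₂ p₃ q₃ hq
    have hA : B ^ 2 * q₂ ^ 2 + lam ^ 2 / q₂ ^ 2 = w ^ 2 * q₂ ^ 2 := by
      field_simp
      linear_combination -hw2
    have hPfun : Pcur B lam p₂ q₂ p₃ q₃ = fun x : ℝ =>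
        (p₃ + lam * p₂ / (w ^ 2 * q₂ ^ 3)) * Real.cos x -
          q₃ / (w * q₂ ^ 2) * Real.sin x - lam * p₂ / (w ^ 2 * q₂ ^ 3) := by
      funext x; rw [hwdef]; rfl
    have hQfun : Qcur B lam p₂ q₂ p₃ q₃ = fun x : ℝ =>
        (w * q₂ ^ 2 * p₃ + lam * p₂ / (w * q₂)) * Real.sin x + q₃ * Real.cos x := by
      funext x; rw [hwdef]; rfl
    refine ⟨⟨?_, ?_⟩, ?_, ?_⟩
    · rw [hPfun]; simp
    · rw [hQfun]; simp
    · intro t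
      have hflow : ωcp B lam (p₂, q₂, Pcur B lam p₂ q₂ p₃ q₃ t, Qcur B lam p₂ q₂ p₃ q₃ t) = w := by
        rw [hwdef]; exact rfl
      constructor
      · rw [hflow, Stmt18Aux.fderiv_H_q3 B lam p₂ q₂ _ _ hq0]
        have hval : -(1 / w) * (Qcur B lam p₂ q₂ p₃ q₃ t / q₂ ^ 2) =
            (p₃ + lam * p₂ / (w ^ 2 * q₂ ^ 3)) * -Real.sin t -
              q₃ / (w * q₂ ^ 2) * Real.cos t := by
          rw [hQfun]
          field_simp
          ring
        rw [hval, hPfun]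
        exact (((Real.hasDerivAt_cos t).const_mul (p₃ + lam * p₂ / (w ^ 2 * q₂ ^ 3))).sub
          ((Real.hasDerivAt_sin t).const_mul (q₃ / (w * q₂ ^ 2)))).sub_const
          (lam * p₂ / (w ^ 2 * q₂ ^ 3))
      · rw [hflow, Stmt18Aux.fderiv_H_p3 B lam p₂ q₂ _ _ hq0]
        have hval : (1 / w) * (Pcur B lam p₂ q₂ p₃ q₃ t *
              (B ^ 2 * q₂ ^ 2 + lam ^ 2 / q₂ ^ 2) + lam * p₂ / q₂) =
            (w * q₂ ^ 2 * p₃ + lam * p₂ / (w * q₂)) * Real.cos t + q₃ * -Real.sin t := by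
          rw [hA, hPfun]
          field_simp
          ring
        rw [hval, hQfun]
        exact ((Real.hasDerivAt_sin t).const_mul (w * q₂ ^ 2 * p₃ + lam * p₂ / (w * q₂))).add
          ((Real.hasDerivAt_cos t).const_mul q₃)
    · intro t
      constructor
      · rw [hPfun]; simp [Real.cos_add_two_pi, Real.sin_add_two_pi]
      · rw [hQfun]; simp [Real.cos_add_two_pi, Real.sin_add_two_pi]
  · -- Block 2
    rintro ⟨p₂, q₂, p₃, q₃⟩ hm
    have hq : 0 < q₂ := hm
    have hq0 : q₂ ≠ 0 := ne_of_gt hq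
    set w := ωcp B lam (p₂, q₂, p₃, q₃) with hwdef
    have hw : 0 < w := Stmt18Aux.omega_pos B lam hB p₂ q₂ p₃ q₃ hq
    have hw0 : w ≠ 0 := ne_of_gt hw
    have hw2 : w ^ 2 * q₂ ^ 4 = B ^ 2 * q₂ ^ 4 + lam ^ 2 :=
      Stmt18Aux.omega_sq B lam hB p₂ q₂ p₃ q₃ hq
    have hA : B ^ 2 * q₂ ^ 2 + lam ^ 2 / q₂ ^ 2 = w ^ 2 * q₂ ^ 2 := by
      field_simp
      linear_combination -hw2
    have hωc : ∀ x y : ℝ, ωcp B lam (p₂, q₂, x, y) = w := fun _ _ => rfl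
    constructor
    · rw [Stmt18Aux.fderiv_H_p3 B lam p₂ q₂ p₃ q₃ hq0]
      have hJ : fderiv ℝ (Jcp B lam) (p₂, q₂, p₃, q₃) (0, 0, 1, 0) =
          w * q₂ ^ 2 * p₃ + lam * p₂ / (w * q₂) := by
        apply Stmt18Aux.fderiv_dir _ _ _ (Stmt18Aux.diff_J B lam hB _ hq)
        have heq : (fun s : ℝ => Jcp B lam ((p₂, q₂, p₃, q₃) +
              s • ((0 : ℝ), (0 : ℝ), (1 : ℝ), (0 : ℝ)))) =
            fun s : ℝ => (1 / (2 * w)) * (q₃ ^ 2 / q₂ ^ 2 +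
              (w * q₂ * (p₃ + s) + lam * p₂ / (w * q₂ ^ 2)) ^ 2) := by
          funext s
          simp [Jcp, hωc]
          try ring
        rw [heq]
        have hid : HasDerivAt (fun s : ℝ => p₃ + s) 1 0 := by
          simpa using (hasDerivAt_id (0 : ℝ)).const_add p₃
        have h := ((((hid.const_mul (w * q₂)).add_const
            (lam * p₂ / (w * q₂ ^ 2))).pow 2).const_add (q₃ ^ 2 / q₂ ^ 2)).const_mul (1 / (2 * w))
        apply HasDerivAt.congr_deriv h
        push_cast
        field_simp
        ring
      rw [hJ]
      field_simp
      linear_combination p₃ * hw2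
    · rw [Stmt18Aux.fderiv_H_q3 B lam p₂ q₂ p₃ q₃ hq0]
      have hJ : fderiv ℝ (Jcp B lam) (p₂, q₂, p₃, q₃) (0, 0, 0, 1) = q₃ / (w * q₂ ^ 2) := by
        apply Stmt18Aux.fderiv_dir _ _ _ (Stmt18Aux.diff_J B lam hB _ hq)
        have heq : (fun s : ℝ => Jcp B lam ((p₂, q₂, p₃, q₃) +
              s • ((0 : ℝ), (0 : ℝ), (0 : ℝ), (1 : ℝ)))) =
            fun s : ℝ => (1 / (2 * w)) * ((q₃ + s) ^ 2 / q₂ ^ 2 +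
              (w * q₂ * p₃ + lam * p₂ / (w * q₂ ^ 2)) ^ 2) := by
          funext s
          simp [Jcp, hωc]
          try ring
        rw [heq]
        have hid : HasDerivAt (fun s : ℝ => q₃ + s) 1 0 := by
          simpa using (hasDerivAt_id (0 : ℝ)).const_add q₃
        have h := (((hid.pow 2).div_const (q₂ ^ 2)).add_const
            ((w * q₂ * p₃ + lam * p₂ / (w * q₂ ^ 2)) ^ 2)).const_mul (1 / (2 * w))
        apply HasDerivAt.congr_deriv h
        push_cast
        field_simp
        ring
      rw [hJ]
      field_simp
      try ring
  · -- Block 3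
    intro p₂ q₂ p₃ q₃ hq t
    have hq0 : q₂ ≠ 0 := ne_of_gt hq
    set w := ωcp B lam (p₂, q₂, p₃, q₃) with hwdef
    have hw : 0 < w := Stmt18Aux.omega_pos B lam hB p₂ q₂ p₃ q₃ hq
    have hw0 : w ≠ 0 := ne_of_gt hw
    have hsc := Real.sin_sq_add_cos_sq t
    have key : ∀ A C : ℝ, (A * Real.sin t + C * Real.cos t) ^ 2 +
        (A * Real.cos t - C * Real.sin t) ^ 2 = A ^ 2 + C ^ 2 := fun A C => by
      linear_combination (A ^ 2 + C ^ 2) * hsc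
    have hflow : ωcp B lam (p₂, q₂, Pcur B lam p₂ q₂ p₃ q₃ t, Qcur B lam p₂ q₂ p₃ q₃ t) = w := by
      rw [hwdef]; exact rfl
    have hP1 : w * q₂ * Pcur B lam p₂ q₂ p₃ q₃ t + lam * p₂ / (w * q₂ ^ 2) =
        (w * q₂ * p₃ + lam * p₂ / (w * q₂ ^ 2)) * Real.cos t - q₃ / q₂ * Real.sin t := by
      have : Pcur B lam p₂ q₂ p₃ q₃ t = (p₃ + lam * p₂ / (w ^ 2 * q₂ ^ 3)) * Real.cos t -
          q₃ / (w * q₂ ^ 2) * Real.sin t - lam * p₂ / (w ^ 2 * q₂ ^ 3) := by rw [hwdef]; rfl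
      rw [this]
      field_simp
      ring
    have hQ1 : Qcur B lam p₂ q₂ p₃ q₃ t ^ 2 / q₂ ^ 2 =
        ((w * q₂ * p₃ + lam * p₂ / (w * q₂ ^ 2)) * Real.sin t + q₃ / q₂ * Real.cos t) ^ 2 := by
      have : Qcur B lam p₂ q₂ p₃ q₃ t =
          (w * q₂ ^ 2 * p₃ + lam * p₂ / (w * q₂)) * Real.sin t + q₃ * Real.cos t := by
        rw [hwdef]; rfl
      rw [this]
      field_simp
    show (1 / (2 * ωcp B lam (p₂, q₂, Pcur B lam p₂ q₂ p₃ q₃ t, Qcur B lam p₂ q₂ p₃ q₃ t))) *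
        (Qcur B lam p₂ q₂ p₃ q₃ t ^ 2 / q₂ ^ 2 +
          (ωcp B lam (p₂, q₂, Pcur B lam p₂ q₂ p₃ q₃ t, Qcur B lam p₂ q₂ p₃ q₃ t) * q₂ *
              Pcur B lam p₂ q₂ p₃ q₃ t + lam * p₂ /
              (ωcp B lam (p₂, q₂, Pcur B lam p₂ q₂ p₃ q₃ t, Qcur B lam p₂ q₂ p₃ q₃ t) * q₂ ^ 2)) ^ 2) =
      (1 / (2 * w)) * (q₃ ^ 2 / q₂ ^ 2 + (w * q₂ * p₃ + lam * p₂ / (w * q₂ ^ 2)) ^ 2)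
    rw [hflow, hP1, hQ1, key]
    field_simp
    ring
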